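/- Let M ≥ 2 and let X, Y ⊆ Z/M with γ_e(X,Y) ≥ 1 for all e ∈ Z/M, where γ_e(X,Y) = #{i ∈ Z/M : i ∈ Y, i+e ∈ X}. Define for n ≥ 1 the n-fold product sets X^{(n)} = {(l_1,…,l_n) ∈ (Z/M)^n : l_j ∈ X for all j} and Y^{(n)} likewise, viewed as subsets of Z/M^n via the M-adic encoding l_1…l_n ↦ Σ_j l_j M^{n−j}. Then for every e ∈ Z/M^n, γ_e(X^{(n)}, Y^{(n)}) ≥ 1, where now γ_e is computed with addition modulo M^n. -/
import Mathlib

lemma key_digits (M : ℕ) [NeZero M] (X Y : Finset (ZMod M))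
    (h1 : ∀ e : ZMod M, ∃ i, i ∈ Y ∧ i + e ∈ X) :
    ∀ n : ℕ, ∀ E : ℕ, ∃ f g : Fin n → ZMod M,
      (∀ j, f j ∈ Y) ∧ (∀ j, g j ∈ X) ∧
      (∑ j : Fin n, (f j).val * M ^ (n - 1 - j.val)) + E ≡
      (∑ j : Fin n, (g j).val * M ^ (n - 1 - j.val)) [MOD M ^ n] := by
  intro n
  induction n with
  | zero =>
      intro E
      exact ⟨Fin.elim0, Fin.elim0, fun j => j.elim0, fun j => j.elim0, Nat.modEq_one⟩
  | succ n ih =>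
      intro E
      set r : ℕ := E % M with hr
      set q : ℕ := E / M with hq
      obtain ⟨i, hiY, hiX⟩ := h1 (r : ZMod M)
      set s : ℕ := (i + (r : ZMod M)).val with hs
      set c : ℕ := (i.val + r) / M with hc
      have hMc : M * c + s = i.val + r := by
        have hsv : s = (i.val + r) % M := by
          rw [hs]
          have : i + (r : ZMod M) = ((i.val + r : ℕ) : ZMod M) := by
            push_cast [ZMod.natCast_val, ZMod.cast_id]
            rfl
          rw [this, ZMod.val_natCast]
        rw [hsv, hc]
        exact Nat.div_add_mod _ M
      have hE : M * q + r = E := Nat.div_add_mod E M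
      obtain ⟨f', g', hf', hg', hmod⟩ := ih (q + c)
      refine ⟨Fin.snoc f' i, Fin.snoc g' (i + (r : ZMod M)), ?_, ?_, ?_⟩
      · intro j
        refine Fin.lastCases ?_ ?_ j
        · simpa using hiY
        · intro k; simpa using hf' k
      · intro j
        refine Fin.lastCases ?_ ?_ j
        · simpa using hiX
        · intro k; simpa using hg' k
      · set A : ℕ := ∑ j : Fin n, (f' j).val * M ^ (n - 1 - j.val) with hA
        set B : ℕ := ∑ j : Fin n, (g' j).val * M ^ (n - 1 - j.val) with hB
        have hsumf : (∑ j : Fin (n+1), ((Fin.snoc f' i : Fin (n+1) → ZMod M) j).val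
            * M ^ (n + 1 - 1 - j.val)) = M * A + i.val := by
          rw [Fin.sum_univ_castSucc]
          simp only [Fin.snoc_castSucc, Fin.snoc_last, Fin.coe_castSucc, Fin.val_last]
          have : ∀ j : Fin n, (f' j).val * M ^ (n + 1 - 1 - j.val)
              = M * ((f' j).val * M ^ (n - 1 - j.val)) := by
            intro j
            have hj : n + 1 - 1 - j.val = (n - 1 - j.val) + 1 := by omega
            rw [hj, pow_succ]
            ring
          rw [Finset.sum_congr rfl (fun j _ => this j), ← Finset.mul_sum, ← hA]
          simp
        have hsumg : (∑ j : Fin (n+1), ((Fin.snoc g' (i + (r : ZMod M)) : Fin (n+1) → ZMod M) j).val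
            * M ^ (n + 1 - 1 - j.val)) = M * B + s := by
          rw [Fin.sum_univ_castSucc]
          simp only [Fin.snoc_castSucc, Fin.snoc_last, Fin.coe_castSucc, Fin.val_last]
          have : ∀ j : Fin n, (g' j).val * M ^ (n + 1 - 1 - j.val)
              = M * ((g' j).val * M ^ (n - 1 - j.val)) := by
            intro j
            have hj : n + 1 - 1 - j.val = (n - 1 - j.val) + 1 := by omega
            rw [hj, pow_succ]
            ring
          rw [Finset.sum_congr rfl (fun j _ => this j), ← Finset.mul_sum, ← hB]
          simp [hs]
        rw [hsumf, hsumg]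
        have hlhs : M * A + i.val + E = M * (A + (q + c)) + s := by
          rw [mul_add, mul_add, ← hE]
          linarith [hMc]
        rw [hlhs]
        have := (hmod.mul_left' (c := M)).add_right s
        rwa [← pow_succ'] at this

theorem stmt_13 (M : ℕ) (hM : 2 ≤ M) [NeZero M] (n : ℕ) (hn : 1 ≤ n) [NeZero (M ^ n)]
    (X Y : Finset (ZMod M))
    (h1 : ∀ e : ZMod M,
      1 ≤ (Finset.univ.filter (fun i : ZMod M => i ∈ Y ∧ i + e ∈ X)).card)
    (Xn Yn : Finset (ZMod (M ^ n)))
    (hXn : Xn = (Fintype.piFinset (fun _ : Fin n => X)).image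
      (fun f => ((∑ j : Fin n, (f j).val * M ^ (n - 1 - j.val) : ℕ) : ZMod (M ^ n))))
    (hYn : Yn = (Fintype.piFinset (fun _ : Fin n => Y)).image
      (fun f => ((∑ j : Fin n, (f j).val * M ^ (n - 1 - j.val) : ℕ) : ZMod (M ^ n)))) :
    ∀ e : ZMod (M ^ n),
      1 ≤ (Finset.univ.filter (fun i : ZMod (M ^ n) => i ∈ Yn ∧ i + e ∈ Xn)).card := by
  have h1' : ∀ e : ZMod M, ∃ i, i ∈ Y ∧ i + e ∈ X := by
    intro e
    have := h1 e
    rw [Nat.one_le_iff_ne_zero, ← Nat.pos_iff_ne_zero, Finset.card_pos] at this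
    obtain ⟨i, hi⟩ := this
    rw [Finset.mem_filter] at hi
    exact ⟨i, hi.2⟩
  intro e
  obtain ⟨f, g, hf, hg, hmod⟩ := key_digits M X Y h1' n e.val
  rw [Nat.one_le_iff_ne_zero, ← Nat.pos_iff_ne_zero, Finset.card_pos]
  refine ⟨((∑ j : Fin n, (f j).val * M ^ (n - 1 - j.val) : ℕ) : ZMod (M ^ n)), ?_⟩
  rw [Finset.mem_filter]
  refine ⟨Finset.mem_univ _, ?_, ?_⟩
  · rw [hYn, Finset.mem_image]
    exact ⟨f, by simpa [Fintype.mem_piFinset] using hf, rfl⟩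
  · rw [hXn, Finset.mem_image]
    refine ⟨g, by simpa [Fintype.mem_piFinset] using hg, ?_⟩
    have : ((∑ j : Fin n, (f j).val * M ^ (n - 1 - j.val) : ℕ) : ZMod (M ^ n)) + e
        = (((∑ j : Fin n, (f j).val * M ^ (n - 1 - j.val)) + e.val : ℕ) : ZMod (M ^ n)) := by
      push_cast [ZMod.natCast_val, ZMod.cast_id]
      rfl
    rw [this]
    exact ((ZMod.natCast_eq_natCast_iff _ _ _).mpr hmod).symm
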